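/- (Theorem 3) For θ ∈ (0, π/2) and c > 0, the squared norm ‖X(n)‖² = ∑_k |X(k,n)|² is equal to c for all n ∈ ℕ if and only if the initial state (α, β, γ) satisfies: |α|² = c, |β|² + |γ|² = c, β·conj(γ) + conj(β)·γ = 0, and α(conj(β) − conj(γ)) + conj(α)(β − γ) = 2c·cos θ. -/

import Mathlib

open Complex

noncomputable section
namespace S14

local notation "conj'" => (starRingEnd ℂ)

/-- finite support -/
def FS (f : ℤ → ℂ) : Prop := ∃ s : Finset ℤ, ∀ k ∉ s, f k = 0

/-- correlation -/
def corr (f g : ℤ → ℂ) (j : ℤ) : ℂ := ∑' k : ℤ, f (k + j) * conj' (g k)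

lemma FS.summ {g : ℤ → ℂ} (hg : FS g) (F : ℤ → ℂ) :
    Summable (fun k => F k * conj' (g k)) := by
  obtain ⟨s, hs⟩ := hg
  apply summable_of_ne_finset_zero (s := s)
  intro k hk
  simp [hs k hk]

lemma corr_conj (f g : ℤ → ℂ) (j : ℤ) : corr g f (-j) = conj' (corr f g j) := by
  unfold corr
  simp only [starRingEnd_apply]
  rw [tsum_star]
  rw [← (Equiv.addRight j).tsum_eq (fun k => g (k + -j) * star (f k))]
  apply tsum_congr
  intro k
  simp only [Equiv.coe_addRight]
  rw [show k + j + -j = k by ring]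
  simp [mul_comm]

lemma re_corr_neg (f : ℤ → ℂ) (j : ℤ) : (corr f f (-j)).re = (corr f f j).re := by
  rw [corr_conj]; simp

def stepf (a : ℝ) (v u : ℤ → ℂ) : ℤ → ℂ := fun k => (a : ℂ) * (v (k + 1) - v (k - 1)) + u k

lemma FS.step {a : ℝ} {u v : ℤ → ℂ} (hu : FS u) (hv : FS v) : FS (stepf a v u) := by
  obtain ⟨su, hsu⟩ := hu
  obtain ⟨sv, hsv⟩ := hv
  refine ⟨su ∪ (sv.image (· - 1) ∪ sv.image (· + 1)), fun k hk => ?_⟩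
  simp only [Finset.mem_union, Finset.mem_image, not_or, not_exists, not_and] at hk
  have h1 : v (k + 1) = 0 := by
    by_contra h
    exact hk.2.1 (k + 1) (by by_contra h2; exact h (hsv _ h2)) (by ring)
  have h2 : v (k - 1) = 0 := by
    by_contra h
    exact hk.2.2 (k - 1) (by by_contra h2; exact h (hsv _ h2)) (by ring)
  simp [stepf, h1, h2, hsu k hk.1]

lemma corr_step_left {g : ℤ → ℂ} (hg : FS g) (a : ℝ) (v u : ℤ → ℂ) (j : ℤ) :
    corr (stepf a v u) g j
      = (a : ℂ) * (corr v g (j + 1) - corr v g (j - 1)) + corr u g j := by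
  unfold corr stepf
  have e : ∀ k : ℤ, ((a : ℂ) * (v (k + j + 1) - v (k + j - 1)) + u (k + j)) * conj' (g k)
      = (a:ℂ) * (v (k + (j+1)) * conj' (g k)) - (a:ℂ) * (v (k + (j-1)) * conj' (g k))
        + u (k + j) * conj' (g k) := by
    intro k
    rw [show k + j + 1 = k + (j+1) by ring, show k + j - 1 = k + (j-1) by ring]
    ring
  rw [tsum_congr e]
  rw [Summable.tsum_add (Summable.sub ((hg.summ _).mul_left _) ((hg.summ _).mul_left _)) (hg.summ _),
    Summable.tsum_sub ((hg.summ _).mul_left _) ((hg.summ _).mul_left _),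
    tsum_mul_left, tsum_mul_left]
  ring


lemma corr_step_right {g u v : ℤ → ℂ} (hg : FS g) (a : ℝ) (j : ℤ) :
    corr g (stepf a v u) j
      = (a : ℂ) * (corr g v (j - 1) - corr g v (j + 1)) + corr g u j := by
  have h1 : corr g (stepf a v u) j = conj' (corr (stepf a v u) g (-j)) := by
    rw [← corr_conj]; norm_num
  rw [h1, corr_step_left hg a v u (-j)]
  rw [map_add, map_mul, map_sub, Complex.conj_ofReal]
  rw [show -j + 1 = -(j-1) by ring, show -j - 1 = -(j+1) by ring,
    ← corr_conj, ← corr_conj, ← corr_conj]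
  ring_nf


lemma cuv_flip (u v : ℤ → ℂ) (j : ℤ) : corr u v j = conj' (corr v u (-j)) := by
  have := corr_conj v u (-j); rwa [neg_neg] at this

lemma re_sub_conj' (z w : ℂ) : (z - conj' w).re = z.re - w.re := by
  simp [Complex.sub_re]

structure Inv (a c : ℝ) (u v : ℤ → ℂ) : Prop where
  hu : FS u
  hv : FS v
  cu0 : corr u u 0 = (c : ℂ)
  cv0 : corr v v 0 = (c : ℂ)
  cure : ∀ j : ℤ, j ≠ 0 → (corr u u j).re = 0
  cvre : ∀ j : ℤ, j ≠ 0 → (corr v v j).re = 0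
  y1 : (corr v u 1).re - (corr v u (-1)).re = -(a * c)
  yj : ∀ j : ℤ, 2 ≤ j → (corr v u j).re - (corr v u (-j)).re = 0

lemma Inv.step {a c : ℝ} {u v : ℤ → ℂ} (h : Inv a c u v) : Inv a c v (stepf a v u) := by
  obtain ⟨hu, hv, cu0, cv0, cure, cvre, y1, yj⟩ := h
  have hw : FS (stepf a v u) := hu.step hv
  have Ewv : ∀ j : ℤ, corr (stepf a v u) v j
      = (a:ℂ) * (corr v v (j+1) - corr v v (j-1)) + conj' (corr v u (-j)) := by
    intro j
    rw [corr_step_left hv, cuv_flip u v j]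
  have Cww : ∀ j : ℤ, corr (stepf a v u) (stepf a v u) j
      = ((a^2 : ℝ):ℂ) * (2 * corr v v j - corr v v (j+2) - corr v v (j-2))
        + (a:ℂ) * ((corr v u (j+1) - conj' (corr v u (-(j+1))))
            - (corr v u (j-1) - conj' (corr v u (-(j-1))))) + corr u u j := by
    intro j
    rw [corr_step_left hw a v u j, corr_step_right hv a (j+1), corr_step_right hv a (j-1),
      corr_step_right hu a j, cuv_flip u v (j-1), cuv_flip u v (j+1)]
    rw [show j+1-1 = j by ring, show j-1+1 = j by ring, show j+1+1 = j+2 by ring,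
      show j-1-1 = j-2 by ring]
    push_cast
    ring
  -- real part versions
  have rCww : ∀ j : ℤ, (corr (stepf a v u) (stepf a v u) j).re
      = a^2 * (2 * (corr v v j).re - (corr v v (j+2)).re - (corr v v (j-2)).re)
        + a * (((corr v u (j+1)).re - (corr v u (-(j+1))).re)
            - ((corr v u (j-1)).re - (corr v u (-(j-1))).re)) + (corr u u j).re := by
    intro j
    rw [Cww j]
    simp only [Complex.add_re, Complex.sub_re, Complex.mul_re, Complex.ofReal_re,
      Complex.ofReal_im, Complex.conj_re, Complex.conj_im, Complex.re_ofNat,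
      Complex.im_ofNat]
    ring
  have rEwv : ∀ j : ℤ, (corr (stepf a v u) v j).re
      = a * ((corr v v (j+1)).re - (corr v v (j-1)).re) + (corr v u (-j)).re := by
    intro j
    rw [Ewv j]
    simp only [Complex.add_re, Complex.sub_re, Complex.mul_re, Complex.ofReal_re,
      Complex.ofReal_im, Complex.conj_re, Complex.conj_im]
    ring
  have rcv0 : (corr v v (0:ℤ)).re = c := by rw [cv0]; simp
  refine ⟨hv, hw, cv0, ?_, cvre, ?_, ?_, ?_⟩
  · -- cv0' : corr w w 0 = c
    rw [Cww 0]
    norm_num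
    have h2 : corr v v (-2) = conj' (corr v v 2) := by
      have := corr_conj v v (2:ℤ); rwa [] at this
    have hA : corr v v 2 + conj' (corr v v 2) = ((2 * (corr v v 2).re : ℝ) : ℂ) := by
      rw [Complex.add_conj]
    rw [cvre 2 (by norm_num)] at hA
    have hB : (corr v u 1 - conj' (corr v u (-1)))
        + conj' (corr v u 1 - conj' (corr v u (-1)))
        = ((2 * ((corr v u 1 - conj' (corr v u (-1))).re) : ℝ) : ℂ) := by
      rw [Complex.add_conj]
    rw [re_sub_conj'] at hB
    rw [y1] at hB
    simp only [map_sub, Complex.conj_conj] at hB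
    rw [h2]
    push_cast at hA hB ⊢
    linear_combination (-(a:ℂ)^2) * hA + (a:ℂ) * hB + 2*(a:ℂ)^2 * cv0 + cu0
  · -- cvre'
    have key : ∀ j : ℤ, 1 ≤ j → (corr (stepf a v u) (stepf a v u) j).re = 0 := by
      intro j hj
      rw [rCww j]
      rcases (by omega : j = 1 ∨ j = 2 ∨ 3 ≤ j) with rfl | rfl | h3
      · have f1 : (corr v v (1:ℤ)).re = 0 := cvre 1 (by norm_num)
        have f2 : (corr v v ((1:ℤ)+2)).re = 0 := cvre 3 (by norm_num)
        have f3 : (corr v v ((1:ℤ)-2)).re = 0 := by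
          rw [show ((1:ℤ)-2) = -1 by norm_num]
          rw [show ((-1) : ℤ) = -(1:ℤ) by norm_num, re_corr_neg]
          exact cvre 1 (by norm_num)
        have f4 : (corr v u ((1:ℤ)+1)).re - (corr v u (-((1:ℤ)+1))).re = 0 :=
          yj 2 (by norm_num)
        have f5 : (corr v u ((1:ℤ)-1)).re - (corr v u (-((1:ℤ)-1))).re = 0 := by
          norm_num
        have f6 : (corr u u (1:ℤ)).re = 0 := cure 1 (by norm_num)
        linear_combination a^2 * (2*f1 - f2 - f3) + a * (f4 - f5) + f6
      · have f1 : (corr v v (2:ℤ)).re = 0 := cvre 2 (by norm_num)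
        have f2 : (corr v v ((2:ℤ)+2)).re = 0 := cvre 4 (by norm_num)
        have f3 : (corr v v ((2:ℤ)-2)).re = c := by norm_num [rcv0]
        have f4 : (corr v u ((2:ℤ)+1)).re - (corr v u (-((2:ℤ)+1))).re = 0 :=
          yj 3 (by norm_num)
        have f5 : (corr v u ((2:ℤ)-1)).re - (corr v u (-((2:ℤ)-1))).re = -(a*c) := by
          norm_num [y1]
        have f6 : (corr u u (2:ℤ)).re = 0 := cure 2 (by norm_num)
        linear_combination a^2 * (2*f1 - f2 - f3) + a * (f4 - f5) + f6
      · have f1 : (corr v v j).re = 0 := cvre j (by omega)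
        have f2 : (corr v v (j+2)).re = 0 := cvre (j+2) (by omega)
        have f3 : (corr v v (j-2)).re = 0 := cvre (j-2) (by omega)
        have f4 : (corr v u (j+1)).re - (corr v u (-(j+1))).re = 0 := yj (j+1) (by omega)
        have f5 : (corr v u (j-1)).re - (corr v u (-(j-1))).re = 0 := yj (j-1) (by omega)
        have f6 : (corr u u j).re = 0 := cure j (by omega)
        linear_combination a^2 * (2*f1 - f2 - f3) + a * (f4 - f5) + f6
    intro j hj
    rcases lt_or_gt_of_ne hj with hneg | hpos
    · have h := re_corr_neg (stepf a v u) (-j)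
      rw [neg_neg] at h
      rw [h]
      exact key (-j) (by omega)
    · exact key j (by omega)
  · -- y1'
    rw [rEwv 1, rEwv (-1)]
    have f1 : (corr v v ((1:ℤ)+1)).re = 0 := cvre 2 (by norm_num)
    have f2 : (corr v v ((1:ℤ)-1)).re = c := by norm_num [rcv0]
    have f3 : (corr v v ((-1:ℤ)+1)).re = c := by norm_num [rcv0]
    have f4 : (corr v v ((-1:ℤ)-1)).re = 0 := by
      rw [show ((-1:ℤ)-1) = -2 by norm_num, show ((-2) : ℤ) = -(2:ℤ) by norm_num,
        re_corr_neg]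
      exact cvre 2 (by norm_num)
    rw [f1, f2, f3, f4]
    have f5 : (corr v u (-(1:ℤ))).re - (corr v u (-(-(1:ℤ)))).re = a*c := by
      rw [show (-(-(1:ℤ))) = 1 by norm_num]
      linarith [y1]
    linear_combination f5
  · -- yj'
    intro j hj
    rw [rEwv j, rEwv (-j)]
    have f1 : (corr v v (j+1)).re = 0 := cvre (j+1) (by omega)
    have f2 : (corr v v (j-1)).re = 0 := cvre (j-1) (by omega)
    have f3 : (corr v v (-j+1)).re = 0 := by
      rw [show (-j+1) = -(j-1) by ring, re_corr_neg]
      exact cvre (j-1) (by omega)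
    have f4 : (corr v v (-j-1)).re = 0 := by
      rw [show (-j-1) = -(j+1) by ring, re_corr_neg]
      exact cvre (j+1) (by omega)
    have f5 : (corr v u j).re - (corr v u (-j)).re = 0 := yj j hj
    rw [f1, f2, f3, f4, show (-(-j)) = j by ring]
    linear_combination -f5


lemma corr_zero_eq (u : ℤ → ℂ) : corr u u 0 = ((∑' k : ℤ, ‖u k‖^2 : ℝ) : ℂ) := by
  unfold corr
  rw [Complex.ofReal_tsum]
  apply tsum_congr
  intro k
  rw [add_zero, Complex.mul_conj]
  norm_cast
  rw [← Complex.sq_norm]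

lemma mul_conj_self (z : ℂ) : z * conj' z = ((‖z‖^2 : ℝ) : ℂ) := by
  rw [Complex.mul_conj]
  norm_cast
  rw [← Complex.sq_norm]

end S14

open S14

local notation "conj'" => (starRingEnd ℂ)

theorem stmt14 (θ : ℝ) (hθ : θ ∈ Set.Ioo 0 (Real.pi / 2)) (c : ℝ) (hc : 0 < c)
    (α β γ : ℂ) (X : ℤ × ℕ → ℂ)
    (hrec : ∀ (k : ℤ) (n : ℕ),
      X (k, n + 2) = (Real.cos θ : ℂ) * (X (k + 1, n + 1) - X (k - 1, n + 1)) + X (k, n))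
    (h00 : X (0, 0) = α) (hm1 : X (-1, 1) = β) (hp1 : X (1, 1) = γ)
    (h0 : ∀ k : ℤ, k ≠ 0 → X (k, 0) = 0)
    (h1 : ∀ k : ℤ, k ≠ -1 → k ≠ 1 → X (k, 1) = 0) :
    (∀ n : ℕ, ∑' k : ℤ, ‖X (k, n)‖ ^ 2 = c) ↔
      (‖α‖ ^ 2 = c ∧ ‖β‖ ^ 2 + ‖γ‖ ^ 2 = c ∧
        β * (starRingEnd ℂ) γ + (starRingEnd ℂ) β * γ = 0 ∧
        α * ((starRingEnd ℂ) β - (starRingEnd ℂ) γ) + (starRingEnd ℂ) α * (β - γ)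
          = ((2 * c * Real.cos θ : ℝ) : ℂ)) := by
  obtain ⟨hθ1, hθ2⟩ := hθ
  set a : ℝ := Real.cos θ with ha
  have ha0 : 0 < a := Real.cos_pos_of_mem_Ioo ⟨by linarith [Real.pi_pos], hθ2⟩
  have ha1 : a < 1 := by
    have := Real.cos_lt_cos_of_nonneg_of_le_pi (le_refl 0) (by linarith [Real.pi_pos]) hθ1
    simpa using this
  have hp1' : X 1 = γ := hp1
  have h00' : X 0 = α := h00
  constructor
  · -- forward
    intro h
    -- values at time 2
    have hX2 : ∀ k : ℤ, k ≠ -2 → k ≠ 0 → k ≠ 2 → X (k, 2) = 0 := by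
      intro k hk2 hk0 hk2'
      have e := hrec k 0
      norm_num at e
      rw [e, h1 (k+1) (by omega) (by omega), h1 (k-1) (by omega) (by omega),
        h0 k (by omega)]
      ring
    have v2m : X (-2, 2) = (a:ℂ) * β := by
      have e := hrec (-2) 0
      norm_num at e
      rw [e, hm1, h1 (-3) (by norm_num) (by norm_num), h0 (-2) (by norm_num)]
      ring
    have v20 : X (0, 2) = (a:ℂ) * (γ - β) + α := by
      have e := hrec 0 0
      norm_num at e
      rw [e, hp1, hm1, h00]
    have v2p : X (2, 2) = -((a:ℂ) * γ) := by
      have e := hrec 2 0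
      norm_num at e
      rw [e, hp1, h1 3 (by norm_num) (by norm_num), h0 2 (by norm_num)]
      ring
    -- values at time 3
    have v3a : X (-3, 3) = (a:ℂ) * ((a:ℂ) * β) := by
      have e := hrec (-3) 1
      norm_num at e
      rw [e, v2m, hX2 (-4) (by norm_num) (by norm_num) (by norm_num),
        h1 (-3) (by norm_num) (by norm_num)]
      ring
    have v3b : X (-1, 3) = (a:ℂ) * (((a:ℂ) * (γ - β) + α) - (a:ℂ) * β) + β := by
      have e := hrec (-1) 1
      norm_num at e
      rw [e, v20, v2m, hm1]
    have v3c : X (1, 3) = (a:ℂ) * (-((a:ℂ) * γ) - ((a:ℂ) * (γ - β) + α)) + γ := by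
      have e := hrec 1 1
      norm_num at e
      rw [e, v2p, v20, hp1]
    have v3d : X (3, 3) = (a:ℂ) * ((a:ℂ) * γ) := by
      have e := hrec 3 1
      norm_num at e
      rw [e, v2p, hX2 4 (by norm_num) (by norm_num) (by norm_num),
        h1 3 (by norm_num) (by norm_num)]
      ring
    -- equation at time 0
    have e0 : ‖α‖^2 = c := by
      rw [← h 0, tsum_eq_single (0:ℤ) (fun k hk => by rw [h0 k hk]; simp), h00]
    -- equation at time 1
    have e1 : ‖β‖^2 + ‖γ‖^2 = c := by
      rw [← h 1, tsum_eq_sum (s := ({-1, 1} : Finset ℤ))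
        (fun k hk => by
          simp only [Finset.mem_insert, Finset.mem_singleton, not_or] at hk
          rw [h1 k hk.1 hk.2]; simp),
        Finset.sum_pair (by norm_num : (-1:ℤ) ≠ 1), hm1, hp1]
    -- equation at time 2
    have e2 : ‖X ((-2:ℤ), 2)‖^2 + ‖X ((0:ℤ), 2)‖^2 + ‖X ((2:ℤ), 2)‖^2 = c := by
      rw [← h 2, tsum_eq_sum (s := ({-2, 0, 2} : Finset ℤ))
        (fun k hk => by
          simp only [Finset.mem_insert, Finset.mem_singleton, not_or] at hk
          rw [hX2 k hk.1 hk.2.1 hk.2.2]; simp)]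
      rw [Finset.sum_insert (by norm_num), Finset.sum_insert (by norm_num),
        Finset.sum_singleton]
      ring
    -- equation at time 3
    have e3 : ‖X ((-3:ℤ), 3)‖^2 + ‖X ((-1:ℤ), 3)‖^2 + ‖X ((1:ℤ), 3)‖^2
        + ‖X ((3:ℤ), 3)‖^2 = c := by
      have hX3 : ∀ k : ℤ, k ∉ ({-3, -1, 1, 3} : Finset ℤ) → X (k, 3) = 0 := by
        intro k hk
        simp only [Finset.mem_insert, Finset.mem_singleton, not_or] at hk
        have e := hrec k 1
        norm_num at e
        rw [e, hX2 (k+1) (by omega) (by omega) (by omega),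
          hX2 (k-1) (by omega) (by omega) (by omega), h1 k (by omega) (by omega)]
        ring
      rw [← h 3, tsum_eq_sum (s := ({-3, -1, 1, 3} : Finset ℤ))
        (fun k hk => by rw [hX3 k hk]; simp)]
      rw [Finset.sum_insert (by norm_num), Finset.sum_insert (by norm_num),
        Finset.sum_insert (by norm_num), Finset.sum_singleton]
      ring
    -- complex versions
    have e0c : α * conj' α = (c:ℂ) := by
      rw [mul_conj_self]; exact_mod_cast e0
    have e1c : β * conj' β + γ * conj' γ = (c:ℂ) := by
      rw [mul_conj_self, mul_conj_self]; exact_mod_cast e1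
    have e2c : ((a:ℂ)*β) * conj' ((a:ℂ)*β)
        + ((a:ℂ)*(γ-β)+α) * conj' ((a:ℂ)*(γ-β)+α)
        + (-((a:ℂ)*γ)) * conj' (-((a:ℂ)*γ)) = (c:ℂ) := by
      rw [mul_conj_self, mul_conj_self, mul_conj_self, ← v2m, ← v20, ← v2p]
      exact_mod_cast e2
    have e3c : ((a:ℂ)*((a:ℂ)*β)) * conj' ((a:ℂ)*((a:ℂ)*β))
        + ((a:ℂ) * (((a:ℂ) * (γ - β) + α) - (a:ℂ) * β) + β)
            * conj' ((a:ℂ) * (((a:ℂ) * (γ - β) + α) - (a:ℂ) * β) + β)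
        + ((a:ℂ) * (-((a:ℂ) * γ) - ((a:ℂ) * (γ - β) + α)) + γ)
            * conj' ((a:ℂ) * (-((a:ℂ) * γ) - ((a:ℂ) * (γ - β) + α)) + γ)
        + ((a:ℂ)*((a:ℂ)*γ)) * conj' ((a:ℂ)*((a:ℂ)*γ)) = (c:ℂ) := by
      rw [mul_conj_self, mul_conj_self, mul_conj_self, mul_conj_self,
        ← v3a, ← v3b, ← v3c, ← v3d]
      exact_mod_cast e3
    -- normalize conjugates
    simp only [map_add, map_sub, map_mul, map_neg, Complex.conj_ofReal] at e2c e3c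
    refine ⟨e0, e1, ?_, ?_⟩
    · -- condition 3
      have hS : ((a:ℂ)^2 - (a:ℂ)^4) * (β * conj' γ + conj' β * γ) = 0 := by
        linear_combination e3c + ((a:ℂ)^2 - 1) * e0c + (2*(a:ℂ)^2 - 1) * e1c
          + (1 - 3*(a:ℂ)^2) * e2c
      have hfac : ((a:ℂ)^2 - (a:ℂ)^4) ≠ 0 := by
        have hp : (0:ℝ) < (a * a) * ((1 - a) * (1 + a)) :=
          mul_pos (mul_pos ha0 ha0)
            (mul_pos (sub_pos.mpr ha1) (show (0:ℝ) < 1 + a by linarith))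
        have : (a:ℝ)^2 - a^4 > 0 := by nlinarith [hp]
        intro hcontra
        rw [show ((a:ℂ)^2 - (a:ℂ)^4) = ((a^2 - a^4 : ℝ) : ℂ) by push_cast; ring] at hcontra
        exact absurd (Complex.ofReal_eq_zero.mp hcontra) (by linarith)
      exact (mul_eq_zero.mp hS).resolve_left hfac
    · -- condition 4
      have hS : β * conj' γ + conj' β * γ = 0 := by
        have hS' : ((a:ℂ)^2 - (a:ℂ)^4) * (β * conj' γ + conj' β * γ) = 0 := by
          linear_combination e3c + ((a:ℂ)^2 - 1) * e0c + (2*(a:ℂ)^2 - 1) * e1c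
            + (1 - 3*(a:ℂ)^2) * e2c
        have hfac : ((a:ℂ)^2 - (a:ℂ)^4) ≠ 0 := by
          have hp : (0:ℝ) < (a * a) * ((1 - a) * (1 + a)) :=
            mul_pos (mul_pos ha0 ha0)
              (mul_pos (sub_pos.mpr ha1) (show (0:ℝ) < 1 + a by linarith))
          have : (a:ℝ)^2 - a^4 > 0 := by nlinarith [hp]
          intro hcontra
          rw [show ((a:ℂ)^2 - (a:ℂ)^4) = ((a^2 - a^4 : ℝ) : ℂ) by push_cast; ring] at hcontra
          exact absurd (Complex.ofReal_eq_zero.mp hcontra) (by linarith)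
        exact (mul_eq_zero.mp hS').resolve_left hfac
      have hane : (a:ℂ) ≠ 0 := by
        simpa using (ne_of_gt ha0)
      apply mul_left_cancel₀ hane
      push_cast
      linear_combination e0c + 2*(a:ℂ)^2 * e1c - e2c - (a:ℂ)^2 * hS
  · -- backward
    rintro ⟨e0, e1, e3, e4⟩
    -- real component facts
    have r3 : β.re * γ.re + β.im * γ.im = 0 := by
      have := congrArg Complex.re e3
      simp only [Complex.add_re, Complex.mul_re, Complex.conj_re, Complex.conj_im,
        Complex.zero_re] at this
      linarith
    have r4 : (α.re * β.re + α.im * β.im) - (α.re * γ.re + α.im * γ.im) = c * a := by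
      have := congrArg Complex.re e4
      simp only [Complex.add_re, Complex.sub_re, Complex.mul_re, Complex.sub_im,
        Complex.conj_re, Complex.conj_im, Complex.ofReal_re] at this
      linarith
    have e0c : α * conj' α = (c:ℂ) := by
      rw [mul_conj_self]; exact_mod_cast e0
    have e1c : β * conj' β + γ * conj' γ = (c:ℂ) := by
      rw [mul_conj_self, mul_conj_self]; exact_mod_cast e1
    -- corr evaluations
    have cu : ∀ j : ℤ, corr (fun k => X (k, 0)) (fun k => X (k, 0)) j
        = X (j, 0) * conj' α := by
      intro j
      unfold corr
      rw [tsum_eq_single (0:ℤ) (fun k hk => by simp [h0 k hk])]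
      show X (0 + j, 0) * conj' (X (0, 0)) = _
      rw [zero_add, h00]
    have cvu : ∀ j : ℤ, corr (fun k => X (k, 1)) (fun k => X (k, 0)) j
        = X (j, 1) * conj' α := by
      intro j
      unfold corr
      rw [tsum_eq_single (0:ℤ) (fun k hk => by simp [h0 k hk])]
      show X (0 + j, 1) * conj' (X (0, 0)) = _
      rw [zero_add, h00]
    have cvv : ∀ j : ℤ, corr (fun k => X (k, 1)) (fun k => X (k, 1)) j
        = X (-1 + j, 1) * conj' β + X (1 + j, 1) * conj' γ := by
      intro j
      unfold corr
      rw [tsum_eq_sum (s := ({-1, 1} : Finset ℤ))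
        (fun k hk => by
          simp only [Finset.mem_insert, Finset.mem_singleton, not_or] at hk
          simp [h1 k hk.1 hk.2]),
        Finset.sum_pair (by norm_num : (-1:ℤ) ≠ 1)]
      show X (-1 + j, 1) * conj' (X (-1, 1)) + X (1 + j, 1) * conj' (X (1, 1)) = _
      rw [hm1, hp1]
    have base : Inv a c (fun k => X (k, 0)) (fun k => X (k, 1)) := by
      refine ⟨⟨{0}, fun k hk => h0 k (by simpa using hk)⟩,
        ⟨{-1, 1}, fun k hk => by
          simp only [Finset.mem_insert, Finset.mem_singleton, not_or] at hk
          exact h1 k hk.1 hk.2⟩, ?_, ?_, ?_, ?_, ?_, ?_⟩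
      · rw [cu 0, h00]; exact e0c
      · rw [cvv 0]
        norm_num
        rw [hm1, hp1]; exact e1c
      · intro j hj
        rw [cu j, h0 j hj]; simp
      · intro j hj
        rcases (by omega : j = 2 ∨ j = -2 ∨ (j ≠ 2 ∧ j ≠ -2)) with rfl | rfl | ⟨hj2, hjm2⟩
        · rw [cvv 2]
          norm_num
          rw [hp1, h1 3 (by norm_num) (by norm_num)]
          simp [Complex.mul_re, Complex.conj_re, Complex.conj_im]
          linarith
        · rw [cvv (-2)]
          norm_num
          rw [hm1, h1 (-3) (by norm_num) (by norm_num)]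
          simp [Complex.mul_re, Complex.conj_re, Complex.conj_im]
          linarith
        · rw [cvv j, h1 (-1 + j) (by omega) (by omega), h1 (1 + j) (by omega) (by omega)]
          simp
      · rw [cvu 1, cvu (-1), hp1, hm1]
        simp only [Complex.sub_re, Complex.mul_re, Complex.conj_re, Complex.conj_im]
        nlinarith [r4]
      · intro j hj
        rw [cvu j, cvu (-j), h1 j (by omega) (by omega), h1 (-j) (by omega) (by omega)]
        simp
    have inv : ∀ n : ℕ, Inv a c (fun k => X (k, n)) (fun k => X (k, n+1)) := by
      intro n
      induction n with
      | zero => exact base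
      | succ m ih =>
        have hst : stepf a (fun k => X (k, m+1)) (fun k => X (k, m))
            = fun k => X (k, m+1+1) := by
          funext k
          show (a:ℂ) * (X (k+1, m+1) - X (k-1, m+1)) + X (k, m) = X (k, m+1+1)
          exact (hrec k m).symm
        have := ih.step
        rwa [hst] at this
    intro n
    have h0' := (inv n).cu0
    rw [corr_zero_eq] at h0'
    exact_mod_cast h0'
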